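/- arXiv:1303.6859 — 2 statements merged into one kernel-verified Lean document; each statement's English description precedes it below -/
import Mathlib

section
/- Let N, M, b, c be natural numbers with c > 0, c dividing N, and let S : Fin N → ℂ. Define U_m = ∑_{k=0}^{N-1} S_k · exp(2πi·k·m·b/(c·M)). For each k ∈ {0,...,c-1} define S'(k) : Fin (N·b/c) → ℂ by S'(k)_n = S_{n·c/b + k} if b divides n, and 0 otherwise, and define U'(k)_m = exp(2πi·m·k·b/(c·M)) · ∑_{n=0}^{Nb/c - 1} S'(k)_n · exp(2πi·n·m/M). Then for every m, U_m = ∑_{k=0}^{c-1} U'(k)_m. -/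
open Real Finset

theorem sefdm_decomposition
    (N M b c : ℕ) (hb : 0 < b) (hc : 0 < c) (hdvd : c ∣ N) (S : ℕ → ℂ)
    (U : ℕ → ℂ)
    (hU : ∀ m, U m = ∑ k ∈ Finset.range N,
      S k * Complex.exp (2 * π * Complex.I * k * m * b / (c * M)))
    (S' : ℕ → ℕ → ℂ)
    (hS' : ∀ k n, S' k n = if b ∣ n then S (n * c / b + k) else 0)
    (U' : ℕ → ℕ → ℂ)
    (hU' : ∀ k m, U' k m = Complex.exp (2 * π * Complex.I * m * k * b / (c * M)) *
      ∑ n ∈ Finset.range (N * b / c), S' k n * Complex.exp (2 * π * Complex.I * n * m / M)) :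
    ∀ m, U m = ∑ k ∈ Finset.range c, U' k m := by
  intro m
  have hNbc : N * b / c = N / c * b := by
    obtain ⟨t, rfl⟩ := hdvd
    rw [Nat.mul_div_cancel_left t hc, mul_assoc, Nat.mul_div_cancel_left _ hc]
  have hexp : ∀ j k : ℕ,
      (2 * (π:ℂ) * Complex.I * (↑(j * c + k)) * m * b / (c * M)) =
      2 * π * Complex.I * m * k * b / (c * M) + 2 * π * Complex.I * (↑(b * j)) * m / M := by
    intro j k
    push_cast
    by_cases hM : (M : ℂ) = 0
    · simp [hM]
    · have hc' : (c : ℂ) ≠ 0 := Nat.cast_ne_zero.mpr hc.ne'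
      field_simp
      ring
  have key : ∀ k, U' k m = ∑ j ∈ Finset.range (N / c),
      S (j * c + k) * Complex.exp (2 * π * Complex.I * (↑(j * c + k)) * m * b / (c * M)) := by
    intro k
    rw [hU' k m, hNbc, Finset.mul_sum]
    have himg : Finset.image (fun j => b * j) (Finset.range (N / c)) ⊆
        Finset.range (N / c * b) := by
      intro x hx
      simp only [Finset.mem_image, Finset.mem_range] at hx ⊢
      obtain ⟨j, hj, rfl⟩ := hx
      calc b * j < b * (N / c) := (Nat.mul_lt_mul_left hb).mpr hj
        _ = N / c * b := mul_comm _ _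
    rw [← Finset.sum_subset himg (by
      intro x hx hnx
      rw [hS', if_neg]
      · ring
      · rintro ⟨y, rfl⟩
        apply hnx
        simp only [Finset.mem_image, Finset.mem_range] at hx ⊢
        refine ⟨y, ?_, rfl⟩
        have : b * y < b * (N / c) := by rw [mul_comm b (N/c)]; exact hx
        exact Nat.lt_of_mul_lt_mul_left this)]
    rw [Finset.sum_image (fun a _ b' _ h => Nat.eq_of_mul_eq_mul_left hb h)]
    refine Finset.sum_congr rfl fun j hj => ?_
    have hSk : S' k (b * j) = S (j * c + k) := by
      rw [hS', if_pos ⟨j, rfl⟩]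
      congr 2
      rw [mul_assoc, Nat.mul_div_cancel_left _ hb]
    rw [hSk, hexp j k, Complex.exp_add]
    ring
  rw [hU m, Finset.sum_congr rfl (fun k _ => key k)]
  rw [← Finset.sum_product']
  refine Finset.sum_nbij' (fun i => ((i % c, i / c) : ℕ × ℕ)) (fun p => p.2 * c + p.1)
    ?_ ?_ ?_ ?_ ?_
  · intro i hi
    simp only [Finset.mem_range, Finset.mem_product] at hi ⊢
    exact ⟨Nat.mod_lt _ hc, Nat.div_lt_div_of_lt_of_dvd hdvd hi⟩
  · intro p hp
    simp only [Finset.mem_range, Finset.mem_product] at hp ⊢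
    obtain ⟨t, rfl⟩ := hdvd
    rw [Nat.mul_div_cancel_left t hc] at hp
    have := hp.1; have := hp.2
    calc p.2 * c + p.1 < (p.2 + 1) * c := by nlinarith
      _ ≤ t * c := Nat.mul_le_mul_right c hp.2
      _ = c * t := mul_comm _ _
  · intro i hi
    simpa using Nat.div_add_mod' i c
  · intro p hp
    obtain ⟨k, j⟩ := p
    simp only [Finset.mem_range, Finset.mem_product] at hp
    have h1 : (j * c + k) % c = k := by
      rw [add_comm, Nat.add_mul_mod_self_right, Nat.mod_eq_of_lt hp.1]
    have h2 : (j * c + k) / c = j := by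
      rw [add_comm, Nat.add_mul_div_right _ _ hc, Nat.div_eq_of_lt hp.1, zero_add]
    simp [h1, h2]
  · intro i hi
    have h : i / c * c + i % c = i := Nat.div_add_mod' i c
    simp [h]
end

section
/- Let b, c, N, M be positive naturals with b·N/c an integer, and consider the SEFDM carrier matrix C (size N × M) with entries c_{nm} = exp(2πi·n·m·b/(c·M)). Let D be the (N·b/c) × M matrix with d_{nm} = exp(2πi·n·m/M) and for k ∈ {0,...,c-1} let R(k) be the M × M diagonal matrix with entries exp(2πi·m·k·b/(c·M)). Then for each n ∈ {0,...,N-1}, writing n = q·c + k with 0 ≤ k < c, the n-th row of C equals the (q·b)-th row of the matrix D·R(k). -/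
open Real

theorem sefdm_rows_are_rotated_ofdm_rows
    (b c N M : ℕ) (hb : 0 < b) (hc : 0 < c) (hN : 0 < N) (hM : 0 < M)
    (hdvd : c ∣ N)
    (C : ℕ → ℕ → ℂ)
    (hC : ∀ n m, C n m = Complex.exp (2 * π * Complex.I * n * m * b / (c * M)))
    (D : ℕ → ℕ → ℂ)
    (hD : ∀ n m, D n m = Complex.exp (2 * π * Complex.I * n * m / M))
    (R : ℕ → ℕ → ℕ → ℂ)
    (hR : ∀ k j m, R k j m =
      if j = m then Complex.exp (2 * π * Complex.I * m * k * b / (c * M)) else 0) :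
    ∀ n < N, ∀ q k : ℕ, k < c → n = q * c + k →
      ∀ m < M, C n m = ∑ j ∈ Finset.range M, D (q * b) j * R k j m := by
  intro n hn q k hk hnqk m hm
  have hsum : ∑ j ∈ Finset.range M, D (q * b) j * R k j m = D (q * b) m * R k m m := by
    apply Finset.sum_eq_single
    · intro j _ hj
      rw [hR]
      simp [hj]
    · intro h
      exact absurd (Finset.mem_range.mpr hm) h
  rw [hsum, hC, hD, hR, if_pos rfl, ← Complex.exp_add, hnqk]
  congr 1
  have hcne : (c : ℂ) ≠ 0 := Nat.cast_ne_zero.mpr hc.ne'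
  have hMne : (M : ℂ) ≠ 0 := Nat.cast_ne_zero.mpr hM.ne'
  push_cast
  field_simp
end
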